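/- Let k and M be integers with 1 ≤ k ≤ M, and let f : ℝ → X be k times continuously differentiable on [0,T]. Let f_n = f(t_n) for 0 ≤ n ≤ M. Then: (i) for every k ≤ n ≤ M, ‖D^k f_n‖ ≤ (√k/√τ) · (∫_{t_{n−k}}^{t_n} ‖∂_t^k f(t)‖² dt)^{1/2}; and (ii) consequently, ‖D^k f‖_0 ≤ k · (∫_0^T ‖∂_t^k f(t)‖² dt)^{1/2}. -/

import Mathlib

/-- backward difference quotient of a sequence. -/
noncomputable def Dq {X : Type*} [NormedAddCommGroup X] [NormedSpace ℝ X] (τ : ℝ) (f : ℕ → X) : ℕ → X :=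
  fun n => τ⁻¹ • (f n - f (n - 1))

/-- discrete `L²` norm `(τ Σ_{n=a}^{b} ‖f n‖²)^{1/2}`. -/
noncomputable def seqNorm0 {X : Type*} [NormedAddCommGroup X]
    (τ : ℝ) (a b : ℕ) (f : ℕ → X) : ℝ :=
  Real.sqrt (τ * ∑ n ∈ Finset.Icc a b, ‖f n‖^2)

open Set MeasureTheory intervalIntegral

set_option linter.unusedSectionVars false

section Aux
variable {X : Type*} [NormedAddCommGroup X] [NormedSpace ℝ X]

/-- continuous-time iterated backward difference quotient. -/
noncomputable def Gd (τ : ℝ) : ℕ → (ℝ → X) → ℝ → X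
  | 0, f => f
  | j+1, f => fun t => τ⁻¹ • (Gd τ j f t - Gd τ j f (t - τ))

/-- chain of derivatives: `Chain T j f φ` means `φ` is the `j`-th derivative of `f`
within `Icc 0 T`. -/
def Chain (T : ℝ) : ℕ → (ℝ → X) → (ℝ → X) → Prop
  | 0, f, φ => f = φ
  | j+1, f, φ => ∃ g : ℝ → X,
      (∀ x ∈ Set.Icc (0:ℝ) T, HasDerivWithinAt f (g x) (Set.Icc 0 T) x) ∧ Chain T j g φ

lemma chain_continuousOn {T : ℝ} {j : ℕ} {f φ : ℝ → X} (h : Chain T (j+1) f φ) :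
    ContinuousOn f (Icc 0 T) := by
  obtain ⟨g, hg, -⟩ := h
  exact fun x hx => (hg x hx).continuousWithinAt

lemma Gd_hasDerivAt {T τ : ℝ} {f g : ℝ → X}
    (hfg : ∀ x ∈ Ioo (0:ℝ) T, HasDerivAt f (g x) x) :
    ∀ (j : ℕ) (u : ℝ), (∀ i : ℕ, i ≤ j → u - (i:ℝ)*τ ∈ Ioo (0:ℝ) T) →
      HasDerivAt (Gd τ j f) (Gd τ j g u) u
  | 0, u, h => by simpa [Gd] using hfg u (by simpa using h 0 le_rfl)
  | j+1, u, h => by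
    have h1 : HasDerivAt (Gd τ j f) (Gd τ j g u) u :=
      Gd_hasDerivAt hfg j u (fun i hi => h i (by omega))
    have h2 : HasDerivAt (Gd τ j f) (Gd τ j g (u - τ)) (u - τ) := by
      refine Gd_hasDerivAt hfg j (u - τ) (fun i hi => ?_)
      have e : u - τ - (i:ℝ)*τ = u - ((i+1:ℕ):ℝ)*τ := by push_cast; ring
      rw [e]; exact h (i+1) (by omega)
    have h2' : HasDerivAt (fun t => Gd τ j f (t - τ)) (Gd τ j g (u - τ)) u :=
      HasDerivAt.comp_sub_const u τ h2
    exact (h1.sub h2').const_smul τ⁻¹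

lemma Gd_continuousOn {T τ : ℝ} {f : ℝ → X} (hf : ContinuousOn f (Icc 0 T)) :
    ∀ (j : ℕ) (a b : ℝ), (∀ i : ℕ, i ≤ j → ∀ u ∈ Icc a b, u - (i:ℝ)*τ ∈ Icc (0:ℝ) T) →
      ContinuousOn (Gd τ j f) (Icc a b)
  | 0, a, b, h => hf.mono (fun u hu => by simpa using h 0 le_rfl u hu)
  | j+1, a, b, h => by
    have h1 : ContinuousOn (Gd τ j f) (Icc a b) :=
      Gd_continuousOn hf j a b (fun i hi => h i (by omega))
    have h3 : ContinuousOn (Gd τ j f) (Icc (a - τ) (b - τ)) := by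
      refine Gd_continuousOn hf j (a-τ) (b-τ) (fun i hi u hu => ?_)
      have e : u - (i:ℝ)*τ = (u + τ) - ((i+1:ℕ):ℝ)*τ := by push_cast; ring
      rw [e]
      exact h (i+1) (by omega) (u+τ) ⟨by linarith [hu.1], by linarith [hu.2]⟩
    have h2 : ContinuousOn (fun t => Gd τ j f (t - τ)) (Icc a b) :=
      h3.comp ((continuous_id.sub continuous_const).continuousOn)
        (fun u hu => ⟨by linarith [hu.1], by linarith [hu.2]⟩)
    show ContinuousOn (fun t => τ⁻¹ • (Gd τ j f t - Gd τ j f (t - τ))) (Icc a b)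
    exact (h1.sub h2).const_smul τ⁻¹

/-- Cauchy–Schwarz for interval integrals of norms. -/
lemma integral_norm_le_sqrt {φ : ℝ → X} {a b : ℝ} (hab : a ≤ b)
    (hc : ContinuousOn φ (Icc a b)) :
    ∫ u in a..b, ‖φ u‖ ≤ Real.sqrt ((b - a) * ∫ u in a..b, ‖φ u‖^2) := by
  rcases eq_or_lt_of_le hab with rfl | hlt
  · simp
  have hbapos : 0 < b - a := sub_pos.2 hlt
  set A := ∫ u in a..b, ‖φ u‖ with hA
  set I := ∫ u in a..b, ‖φ u‖^2 with hI
  have hnc : ContinuousOn (fun u => ‖φ u‖) (Icc a b) := hc.norm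
  have hint1 : IntervalIntegrable (fun u => ‖φ u‖) volume a b :=
    (hnc.mono (by rw [uIcc_of_le hab])).intervalIntegrable
  have hint2 : IntervalIntegrable (fun u => ‖φ u‖^2) volume a b :=
    ((hnc.pow 2).mono (by rw [uIcc_of_le hab])).intervalIntegrable
  have hA0 : 0 ≤ A := intervalIntegral.integral_nonneg hab (fun u _ => norm_nonneg _)
  set c := A / (b - a) with hc'
  have hcA : c * (b - a) = A := div_mul_cancel₀ _ hbapos.ne'
  have key : 0 ≤ ∫ u in a..b, (‖φ u‖ - c)^2 :=
    intervalIntegral.integral_nonneg hab (fun u _ => sq_nonneg _)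
  have expand : ∫ u in a..b, (‖φ u‖ - c)^2 = I - 2*c*A + c^2*(b-a) := by
    have e1 : ∫ u in a..b, (‖φ u‖ - c)^2
        = ∫ u in a..b, (‖φ u‖^2 - (2*c)*‖φ u‖ + c^2) :=
      intervalIntegral.integral_congr (fun u _ => by ring)
    rw [e1, intervalIntegral.integral_add (hint2.sub (hint1.const_mul _))
      intervalIntegrable_const,
      intervalIntegral.integral_sub hint2 (hint1.const_mul _),
      intervalIntegral.integral_const_mul, intervalIntegral.integral_const]
    simp only [smul_eq_mul, ← hA, ← hI]
    ring
  have h4 : A^2 ≤ (b-a) * I := by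
    rw [expand] at key
    nlinarith [mul_nonneg hbapos.le key]
  calc A = Real.sqrt (A^2) := (Real.sqrt_sq hA0).symm
    _ ≤ Real.sqrt ((b-a)*I) := Real.sqrt_le_sqrt h4


variable [CompleteSpace X]

lemma sqrt_alg {τ I : ℝ} (hτ : 0 < τ) : τ⁻¹ * Real.sqrt (τ * I) = Real.sqrt (τ⁻¹ * I) := by
  rw [show τ⁻¹ * Real.sqrt (τ * I) = Real.sqrt ((τ⁻¹)^2) * Real.sqrt (τ * I) by
      rw [Real.sqrt_sq (inv_nonneg.2 hτ.le)],
    ← Real.sqrt_mul (sq_nonneg _)]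
  congr 1
  field_simp

/-- key estimate. -/
lemma key_est {T : ℝ} {τ : ℝ} (hτ : 0 < τ) {φ : ℝ → X}
    (hφc : ContinuousOn φ (Icc 0 T)) :
    ∀ j : ℕ, 1 ≤ j → ∀ f : ℝ → X, Chain T j f φ →
      ∀ t : ℝ, (j:ℝ)*τ ≤ t → t ≤ T →
      ‖Gd τ j f t‖ ≤ Real.sqrt (τ⁻¹ * ∫ u in (t - (j:ℝ)*τ)..t, ‖φ u‖^2) := by
  intro j hj
  induction j, hj using Nat.le_induction with
  | base =>
    intro f hch t ht1 ht2
    obtain ⟨g, hfg, hg⟩ := hch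
    rw [show g = φ from hg] at hfg
    have ht1' : τ ≤ t := by simpa using ht1
    have ht0 : (0:ℝ) ≤ t - τ := by linarith
    have hsub : Icc (t - τ) t ⊆ Icc (0:ℝ) T :=
      Icc_subset_Icc ht0 ht2
    have hab : t - τ ≤ t := by linarith
    have hfcont : ContinuousOn f (Icc 0 T) := fun x hx => (hfg x hx).continuousWithinAt
    have hcf : ContinuousOn f (Icc (t-τ) t) := hfcont.mono hsub
    have hFTC : ∫ u in (t-τ)..t, φ u = f t - f (t - τ) := by
      refine integral_eq_sub_of_hasDeriv_right_of_le hab hcf (fun x hx => ?_) ?_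
      · have hx' : x ∈ Ioo (0:ℝ) T := ⟨by linarith [hx.1], lt_of_lt_of_le hx.2 ht2⟩
        exact ((hfg x (hsub (Ioo_subset_Icc_self hx))).hasDerivAt
          (Icc_mem_nhds hx'.1 hx'.2)).hasDerivWithinAt
      · exact ((hφc.mono hsub).mono (by rw [uIcc_of_le hab])).intervalIntegrable
    have hCS : ∫ u in (t-τ)..t, ‖φ u‖ ≤ Real.sqrt (τ * ∫ u in (t-τ)..t, ‖φ u‖^2) := by
      have := integral_norm_le_sqrt hab (hφc.mono hsub)
      simpa [show t - (t - τ) = τ by ring] using this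
    have hGd : ‖Gd τ 1 f t‖ = τ⁻¹ * ‖f t - f (t - τ)‖ := by
      rw [show Gd τ 1 f t = τ⁻¹ • (f t - f (t - τ)) from rfl, norm_smul,
        Real.norm_eq_abs, abs_of_pos (inv_pos.2 hτ)]
    have hfin : ‖Gd τ 1 f t‖ ≤ Real.sqrt (τ⁻¹ * ∫ u in (t-τ)..t, ‖φ u‖^2) := by
      rw [hGd, ← hFTC]
      calc τ⁻¹ * ‖∫ u in (t-τ)..t, φ u‖
          ≤ τ⁻¹ * ∫ u in (t-τ)..t, ‖φ u‖ := by
            gcongr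
            exact intervalIntegral.norm_integral_le_integral_norm hab
        _ ≤ τ⁻¹ * Real.sqrt (τ * ∫ u in (t-τ)..t, ‖φ u‖^2) := by gcongr
        _ = Real.sqrt (τ⁻¹ * ∫ u in (t-τ)..t, ‖φ u‖^2) := sqrt_alg hτ
    refine le_of_le_of_eq hfin ?_
    norm_num
  | succ j hj IH =>
    intro f hch t ht1 ht2
    obtain ⟨g, hfg, hg⟩ := hch
    push_cast at ht1
    have ht0 : (0:ℝ) ≤ t - ((j:ℝ)+1)*τ := by linarith
    have hab : t - τ ≤ t := by linarith
    have hgc : ContinuousOn g (Icc 0 T) := by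
      obtain ⟨m, rfl⟩ : ∃ m, j = m + 1 := ⟨j-1, by omega⟩
      exact chain_continuousOn hg
    have hfc : ContinuousOn f (Icc 0 T) := fun x hx => (hfg x hx).continuousWithinAt
    have hfg' : ∀ x ∈ Ioo (0:ℝ) T, HasDerivAt f (g x) x := fun x hx =>
      (hfg x (Ioo_subset_Icc_self hx)).hasDerivAt (Icc_mem_nhds hx.1 hx.2)
    have hjτ : (0:ℝ) ≤ ((j:ℝ)+1)*τ := by positivity
    have hmem : ∀ i : ℕ, i ≤ j → ∀ u ∈ Icc (t-τ) t, u - (i:ℝ)*τ ∈ Icc (0:ℝ) T := by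
      intro i hi u hu
      have hij : (i:ℝ) ≤ (j:ℝ) := by exact_mod_cast hi
      have h1 := mul_le_mul_of_nonneg_right hij hτ.le
      have h2 : (0:ℝ) ≤ (i:ℝ)*τ := by positivity
      exact ⟨by linarith [hu.1], by linarith [hu.2]⟩
    have hcont : ContinuousOn (Gd τ j f) (Icc (t-τ) t) := Gd_continuousOn hfc j (t-τ) t hmem
    have hGdd : ∀ u ∈ Ioo (t-τ) t, HasDerivWithinAt (Gd τ j f) (Gd τ j g u) (Ioi u) u := by
      intro u hu
      refine (Gd_hasDerivAt hfg' j u (fun i hi => ?_)).hasDerivWithinAt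
      have hij : (i:ℝ) ≤ (j:ℝ) := by exact_mod_cast hi
      have h1 := mul_le_mul_of_nonneg_right hij hτ.le
      have h2 : (0:ℝ) ≤ (i:ℝ)*τ := by positivity
      exact ⟨by linarith [hu.1], by linarith [hu.2]⟩
    have hint : IntervalIntegrable (Gd τ j g) volume (t-τ) t :=
      ((Gd_continuousOn hgc j (t-τ) t hmem).mono (by rw [uIcc_of_le hab])).intervalIntegrable
    have hFTC : ∫ u in (t-τ)..t, Gd τ j g u = Gd τ j f t - Gd τ j f (t - τ) :=
      integral_eq_sub_of_hasDeriv_right_of_le hab hcont hGdd hint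
    set I := ∫ u in (t - ((j:ℝ)+1)*τ)..t, ‖φ u‖^2 with hIdef
    have hIsub : Icc (t - ((j:ℝ)+1)*τ) t ⊆ Icc (0:ℝ) T := Icc_subset_Icc ht0 ht2
    have hIint : IntervalIntegrable (fun u => ‖φ u‖^2) volume (t - ((j:ℝ)+1)*τ) t :=
      (((hφc.norm.pow 2).mono hIsub).mono
        (by rw [uIcc_of_le (by linarith : t - ((j:ℝ)+1)*τ ≤ t)])).intervalIntegrable
    have hI0 : 0 ≤ I :=
      intervalIntegral.integral_nonneg (by linarith) (fun u _ => sq_nonneg _)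
    have hpt : ∀ u ∈ Set.uIoc (t-τ) t, ‖Gd τ j g u‖ ≤ Real.sqrt (τ⁻¹ * I) := by
      intro u hu
      rw [uIoc_of_le hab] at hu
      have hu1 : (j:ℝ)*τ ≤ u := by linarith [hu.1]
      have hu2 : u ≤ T := le_trans hu.2 ht2
      refine le_trans (IH g hg u hu1 hu2) (Real.sqrt_le_sqrt ?_)
      have hjτ2 : (0:ℝ) ≤ (j:ℝ)*τ := by positivity
      have hmono : ∫ x in (u - (j:ℝ)*τ)..u, ‖φ x‖^2 ≤ I := by
        refine intervalIntegral.integral_mono_interval (by linarith [hu.1]) (by linarith)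
          hu.2 (Filter.Eventually.of_forall (fun x => sq_nonneg _)) hIint
      exact mul_le_mul_of_nonneg_left hmono (inv_nonneg.2 hτ.le)
    have hbound : ‖∫ u in (t-τ)..t, Gd τ j g u‖ ≤ Real.sqrt (τ⁻¹ * I) * |t - (t-τ)| :=
      intervalIntegral.norm_integral_le_of_norm_le_const hpt
    have habs : |t - (t-τ)| = τ := by rw [show t - (t-τ) = τ by ring, abs_of_pos hτ]
    have hGoal : ‖Gd τ (j+1) f t‖ ≤ Real.sqrt (τ⁻¹ * I) := by
      have : ‖Gd τ (j+1) f t‖ = τ⁻¹ * ‖Gd τ j f t - Gd τ j f (t - τ)‖ := by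
        rw [show Gd τ (j+1) f t = τ⁻¹ • (Gd τ j f t - Gd τ j f (t - τ)) from rfl, norm_smul,
          Real.norm_eq_abs, abs_of_pos (inv_pos.2 hτ)]
      rw [this, ← hFTC]
      calc τ⁻¹ * ‖∫ u in (t-τ)..t, Gd τ j g u‖
          ≤ τ⁻¹ * (Real.sqrt (τ⁻¹ * I) * |t - (t-τ)|) :=
            mul_le_mul_of_nonneg_left hbound (inv_nonneg.2 hτ.le)
        _ = Real.sqrt (τ⁻¹ * I) := by rw [habs]; field_simp
    refine le_of_le_of_eq hGoal ?_
    congr 2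
    push_cast
    ring

lemma chain_of_contDiffOn {T : ℝ} (hT : 0 < T) {k : ℕ} {f : ℝ → X}
    (hf : ContDiffOn ℝ (k:ℕ∞) f (Set.Icc 0 T)) :
    ∀ (j m : ℕ), m + j = k →
      Chain T j (iteratedDerivWithin m f (Set.Icc 0 T)) (iteratedDerivWithin k f (Set.Icc 0 T))
  | 0, m, h => by
    have : m = k := by omega
    subst this
    rfl
  | j+1, m, h => by
    have hu : UniqueDiffOn ℝ (Set.Icc (0:ℝ) T) := uniqueDiffOn_Icc hT
    refine ⟨iteratedDerivWithin (m+1) f (Set.Icc 0 T), fun x hx => ?_,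
      chain_of_contDiffOn hT hf j (m+1) (by omega)⟩
    have hmk : m < k := by omega
    have hd : DifferentiableWithinAt ℝ (iteratedDerivWithin m f (Set.Icc 0 T)) (Set.Icc 0 T) x :=
      hf.differentiableOn_iteratedDerivWithin (by exact_mod_cast hmk) hu x hx
    have := hd.hasDerivWithinAt
    rwa [← iteratedDerivWithin_succ] at this

lemma dq_eq_Gd {τ : ℝ} {f : ℝ → X} {s : ℕ → X} (hs : s = fun n : ℕ => f ((n:ℝ)*τ)) :
    ∀ (j n : ℕ), j ≤ n → (Dq τ)^[j] s n = Gd τ j f ((n:ℝ)*τ)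
  | 0, n, _ => by simp [hs, Gd]
  | j+1, n, h => by
    rw [Function.iterate_succ_apply']
    have h1 : (Dq τ)^[j] s n = Gd τ j f ((n:ℝ)*τ) := dq_eq_Gd hs j n (by omega)
    have h2 : (Dq τ)^[j] s (n-1) = Gd τ j f (((n-1:ℕ):ℝ)*τ) := dq_eq_Gd hs j (n-1) (by omega)
    show τ⁻¹ • ((Dq τ)^[j] s n - (Dq τ)^[j] s (n-1))
      = τ⁻¹ • (Gd τ j f ((n:ℝ)*τ) - Gd τ j f ((n:ℝ)*τ - τ))
    rw [h1, h2]
    congr 3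
    rw [Nat.cast_sub (by omega : 1 ≤ n)]
    push_cast
    ring

end Aux

/-- Estimates (4.22)–(4.23): bounds for the `k`-th difference quotients of the
values of a function with `k` continuous derivatives on `[0,T]` in terms of
`L²`-in-time norms of its `k`-th derivative. -/
theorem dq_bounds_by_derivatives
    {X : Type*} [NormedAddCommGroup X] [InnerProductSpace ℝ X] [CompleteSpace X]
    (T : ℝ) (hT : 0 < T) (M : ℕ) (hM : 0 < M) (τ : ℝ) (hτ : τ = T / M)
    (k : ℕ) (hk : 1 ≤ k) (hkM : k ≤ M)
    (f : ℝ → X) (hf : ContDiffOn ℝ (k : ℕ∞) f (Set.Icc 0 T))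
    (s : ℕ → X) (hs : s = fun n : ℕ => f ((n : ℝ) * τ)) :
    (∀ n : ℕ, k ≤ n → n ≤ M →
      ‖(Dq τ)^[k] s n‖ ≤
        (Real.sqrt k / Real.sqrt τ) *
          (∫ t in (((n:ℝ) - (k:ℝ)) * τ)..((n:ℝ) * τ),
            ‖iteratedDerivWithin k f (Set.Icc 0 T) t‖^2) ^ ((1:ℝ)/2))
    ∧ seqNorm0 τ k M ((Dq τ)^[k] s) ≤
        (k:ℝ) * (∫ t in (0:ℝ)..T, ‖iteratedDerivWithin k f (Set.Icc 0 T) t‖^2) ^ ((1:ℝ)/2) := by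
  have hMpos : (0:ℝ) < M := by exact_mod_cast hM
  have hτpos : 0 < τ := by rw [hτ]; positivity
  have hMτ : (M:ℝ) * τ = T := by rw [hτ]; field_simp
  set φ : ℝ → X := iteratedDerivWithin k f (Set.Icc 0 T) with hφ
  have huD : UniqueDiffOn ℝ (Set.Icc (0:ℝ) T) := uniqueDiffOn_Icc hT
  have hφc : ContinuousOn φ (Set.Icc 0 T) :=
    hf.continuousOn_iteratedDerivWithin (by exact_mod_cast le_refl (k:ℕ∞)) huD
  have hchain : Chain T k f φ := by
    have := chain_of_contDiffOn hT hf k 0 (by omega)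
    rwa [iteratedDerivWithin_zero] at this
  set In : ℕ → ℝ := fun n => ∫ u in ((n:ℝ)*τ - (k:ℝ)*τ)..((n:ℝ)*τ), ‖φ u‖^2 with hIn
  have hφsq : ContinuousOn (fun u => ‖φ u‖^2) (Set.Icc 0 T) := hφc.norm.pow 2
  have hkτ : (0:ℝ) ≤ (k:ℝ)*τ := by positivity
  have hIn0 : ∀ n : ℕ, 0 ≤ In n := fun n =>
    intervalIntegral.integral_nonneg (by linarith) (fun u _ => sq_nonneg _)
  have hbound : ∀ n : ℕ, k ≤ n → n ≤ M →
      ‖(Dq τ)^[k] s n‖ ≤ Real.sqrt (τ⁻¹ * In n) := by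
    intro n hkn hnM
    have ht1 : (k:ℝ)*τ ≤ (n:ℝ)*τ :=
      mul_le_mul_of_nonneg_right (by exact_mod_cast hkn) hτpos.le
    have ht2 : (n:ℝ)*τ ≤ T := by
      rw [← hMτ]; exact mul_le_mul_of_nonneg_right (by exact_mod_cast hnM) hτpos.le
    rw [dq_eq_Gd hs k n hkn]
    exact key_est hτpos hφc k hk f hchain ((n:ℝ)*τ) ht1 ht2
  have hsqrtk : (1:ℝ) ≤ Real.sqrt k := by
    rw [show (1:ℝ) = Real.sqrt 1 by simp]
    exact Real.sqrt_le_sqrt (by exact_mod_cast hk)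
  have part1 : ∀ n : ℕ, k ≤ n → n ≤ M →
      ‖(Dq τ)^[k] s n‖ ≤
        (Real.sqrt k / Real.sqrt τ) *
          (∫ t in (((n:ℝ) - (k:ℝ)) * τ)..((n:ℝ) * τ), ‖φ t‖^2) ^ ((1:ℝ)/2) := by
    intro n hkn hnM
    have h := hbound n hkn hnM
    have e0 : ((n:ℝ) - (k:ℝ)) * τ = (n:ℝ)*τ - (k:ℝ)*τ := by ring
    rw [e0]
    have e2 : (In n) ^ ((1:ℝ)/2) = Real.sqrt (In n) := (Real.sqrt_eq_rpow _).symm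
    refine le_trans h ?_
    rw [show (∫ t in ((n:ℝ)*τ - (k:ℝ)*τ)..((n:ℝ)*τ), ‖φ t‖^2) = In n from rfl, e2,
      Real.sqrt_mul (inv_nonneg.2 hτpos.le), Real.sqrt_inv, div_eq_mul_inv]
    have := mul_le_mul_of_nonneg_right
      (le_mul_of_one_le_left (inv_nonneg.2 (Real.sqrt_nonneg τ)) hsqrtk)
      (Real.sqrt_nonneg (In n))
    linarith [this]
  refine ⟨part1, ?_⟩
  -- part (ii)
  set J : ℕ → ℝ := fun m => ∫ u in (((m:ℝ)-1)*τ)..((m:ℝ)*τ), ‖φ u‖^2 with hJ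
  have hJ0 : ∀ m : ℕ, 0 ≤ J m := fun m =>
    intervalIntegral.integral_nonneg (by nlinarith [hτpos.le]) (fun u _ => sq_nonneg _)
  have hsubint : ∀ a b : ℝ, 0 ≤ a → b ≤ T → a ≤ b →
      IntervalIntegrable (fun u => ‖φ u‖^2) volume a b := by
    intro a b ha hb hab
    exact ((hφsq.mono (Icc_subset_Icc ha hb)).mono (by rw [uIcc_of_le hab])).intervalIntegrable
  have hJtot : ∑ m ∈ Finset.Icc 1 M, J m = ∫ u in (0:ℝ)..T, ‖φ u‖^2 := by
    have hadj : ∑ i ∈ Finset.range M, ∫ u in ((i:ℝ)*τ)..(((i+1:ℕ):ℝ)*τ), ‖φ u‖^2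
        = ∫ u in (((0:ℕ):ℝ)*τ)..(((M:ℕ):ℝ)*τ), ‖φ u‖^2 := by
      apply intervalIntegral.sum_integral_adjacent_intervals
      intro i hi
      refine hsubint _ _ (by positivity) ?_ ?_
      · rw [← hMτ]
        exact mul_le_mul_of_nonneg_right
          (by exact_mod_cast (by omega : i + 1 ≤ M)) hτpos.le
      · exact mul_le_mul_of_nonneg_right
          (by exact_mod_cast (by omega : i ≤ i + 1)) hτpos.le
    rw [show Finset.Icc 1 M = Finset.Ico 1 (M+1) from (Finset.Ico_add_one_right_eq_Icc 1 M).symm,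
      Finset.sum_Ico_eq_sum_range]
    simp only [Nat.add_sub_cancel]
    rw [show (∫ u in (0:ℝ)..T, ‖φ u‖^2)
        = ∫ u in (((0:ℕ):ℝ)*τ)..(((M:ℕ):ℝ)*τ), ‖φ u‖^2 by rw [hMτ]; norm_num]
    rw [← hadj]
    refine Finset.sum_congr rfl (fun i _ => ?_)
    have b1 : (((1+i:ℕ):ℝ) - 1) * τ = (i:ℝ)*τ := by push_cast; ring
    have b2 : ((1+i:ℕ):ℝ)*τ = ((i+1:ℕ):ℝ)*τ := by push_cast; ring
    simp only [hJ]
    rw [b1, b2]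
  have hIJ : ∀ n : ℕ, k ≤ n → n ≤ M → In n = ∑ i ∈ Finset.range k, J (n - i) := by
    intro n hkn hnM
    have hadj : ∑ i ∈ Finset.range k, ∫ u in (((n-k+i:ℕ):ℝ)*τ)..(((n-k+(i+1):ℕ):ℝ)*τ), ‖φ u‖^2
        = ∫ u in (((n-k+0:ℕ):ℝ)*τ)..(((n-k+k:ℕ):ℝ)*τ), ‖φ u‖^2 := by
      apply intervalIntegral.sum_integral_adjacent_intervals
      intro i hi
      refine hsubint _ _ (by positivity) ?_ ?_
      · rw [← hMτ]
        exact mul_le_mul_of_nonneg_right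
          (by exact_mod_cast (by omega : n - k + (i+1) ≤ M)) hτpos.le
      · exact mul_le_mul_of_nonneg_right
          (by exact_mod_cast (by omega : n - k + i ≤ n - k + (i+1))) hτpos.le
    have e0 : In n = ∫ u in (((n-k+0:ℕ):ℝ)*τ)..(((n-k+k:ℕ):ℝ)*τ), ‖φ u‖^2 := by
      simp only [hIn]
      congr 2
      · rw [Nat.add_zero, Nat.cast_sub hkn]; ring
      · congr 1; exact_mod_cast (by omega : n = n - k + k)
    rw [e0, ← hadj]
    rw [← Finset.sum_range_reflect]
    refine Finset.sum_congr rfl (fun i hi => ?_)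
    have hik : i < k := Finset.mem_range.1 hi
    rw [show n - k + (k - 1 - i) = n - i - 1 from by omega]
    rw [show n - k + (k - 1 - i + 1) = n - i from by omega]
    simp only [hJ]
    rw [show ((n - i - 1:ℕ):ℝ) = ((n-i:ℕ):ℝ) - 1 from by
      rw [Nat.cast_sub (by omega : 1 ≤ n - i)]; norm_num]
  have hinner : ∀ i : ℕ, i < k → ∑ n ∈ Finset.Icc k M, J (n - i) ≤ ∫ u in (0:ℝ)..T, ‖φ u‖^2 := by
    intro i hik
    have hmap : Finset.Icc k M = Finset.map (addLeftEmbedding i) (Finset.Icc (k-i) (M-i)) := by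
      rw [Finset.map_add_left_Icc]
      congr 1 <;> omega
    rw [hmap, Finset.sum_map]
    have e : ∀ m ∈ Finset.Icc (k-i) (M-i), J (addLeftEmbedding i m - i) = J m := by
      intro m _
      congr 1
      simp [addLeftEmbedding]
    rw [Finset.sum_congr rfl e, ← hJtot]
    refine Finset.sum_le_sum_of_subset_of_nonneg ?_ (fun m _ _ => hJ0 m)
    apply Finset.Icc_subset_Icc <;> omega
  have hcover : ∑ n ∈ Finset.Icc k M, In n ≤ (k:ℝ) * ∫ u in (0:ℝ)..T, ‖φ u‖^2 := by
    calc ∑ n ∈ Finset.Icc k M, In n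
        = ∑ n ∈ Finset.Icc k M, ∑ i ∈ Finset.range k, J (n - i) :=
          Finset.sum_congr rfl (fun n hn => hIJ n (Finset.mem_Icc.1 hn).1 (Finset.mem_Icc.1 hn).2)
      _ = ∑ i ∈ Finset.range k, ∑ n ∈ Finset.Icc k M, J (n - i) := Finset.sum_comm
      _ ≤ ∑ i ∈ Finset.range k, ∫ u in (0:ℝ)..T, ‖φ u‖^2 :=
          Finset.sum_le_sum (fun i hi => hinner i (Finset.mem_range.1 hi))
      _ = (k:ℝ) * ∫ u in (0:ℝ)..T, ‖φ u‖^2 := by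
          rw [Finset.sum_const, Finset.card_range, nsmul_eq_mul]
  have hT0 : 0 ≤ ∫ u in (0:ℝ)..T, ‖φ u‖^2 :=
    intervalIntegral.integral_nonneg hT.le (fun u _ => sq_nonneg _)
  have hsq : ∀ n ∈ Finset.Icc k M, ‖(Dq τ)^[k] s n‖^2 ≤ τ⁻¹ * In n := by
    intro n hn
    obtain ⟨h1, h2⟩ := Finset.mem_Icc.1 hn
    calc ‖(Dq τ)^[k] s n‖^2 ≤ (Real.sqrt (τ⁻¹ * In n))^2 := by
          have := hbound n h1 h2
          exact pow_le_pow_left₀ (norm_nonneg _) this 2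
      _ = τ⁻¹ * In n := Real.sq_sqrt (mul_nonneg (inv_nonneg.2 hτpos.le) (hIn0 n))
  show Real.sqrt (τ * ∑ n ∈ Finset.Icc k M, ‖(Dq τ)^[k] s n‖^2) ≤ _
  have hmain : τ * ∑ n ∈ Finset.Icc k M, ‖(Dq τ)^[k] s n‖^2
      ≤ (k:ℝ) * ∫ u in (0:ℝ)..T, ‖φ u‖^2 := by
    calc τ * ∑ n ∈ Finset.Icc k M, ‖(Dq τ)^[k] s n‖^2
        ≤ τ * ∑ n ∈ Finset.Icc k M, τ⁻¹ * In n :=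
          mul_le_mul_of_nonneg_left (Finset.sum_le_sum hsq) hτpos.le
      _ = ∑ n ∈ Finset.Icc k M, In n := by
          rw [← Finset.mul_sum, ← mul_assoc, mul_inv_cancel₀ hτpos.ne', one_mul]
      _ ≤ (k:ℝ) * ∫ u in (0:ℝ)..T, ‖φ u‖^2 := hcover
  calc Real.sqrt (τ * ∑ n ∈ Finset.Icc k M, ‖(Dq τ)^[k] s n‖^2)
      ≤ Real.sqrt ((k:ℝ) * ∫ u in (0:ℝ)..T, ‖φ u‖^2) := Real.sqrt_le_sqrt hmain
    _ = Real.sqrt k * Real.sqrt (∫ u in (0:ℝ)..T, ‖φ u‖^2) :=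
        Real.sqrt_mul (by positivity) _
    _ ≤ (k:ℝ) * (∫ u in (0:ℝ)..T, ‖φ u‖^2) ^ ((1:ℝ)/2) := by
        rw [show ((∫ u in (0:ℝ)..T, ‖φ u‖^2) ^ ((1:ℝ)/2))
            = Real.sqrt (∫ u in (0:ℝ)..T, ‖φ u‖^2) from (Real.sqrt_eq_rpow _).symm]
        refine mul_le_mul_of_nonneg_right ?_ (Real.sqrt_nonneg _)
        have hk1 : (1:ℝ) ≤ (k:ℝ) := by exact_mod_cast hk
        calc Real.sqrt (k:ℝ) ≤ Real.sqrt ((k:ℝ)^2) := Real.sqrt_le_sqrt (by nlinarith)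
          _ = (k:ℝ) := Real.sqrt_sq (by positivity)
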